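/- Let α be an ordinal (with its usual well-order <) sitting as a subgraph A = α+1 inside a directed graph (G,E) where the only arrows within A are (ξ₁,ξ₂) for ξ₁ < ξ₂, no arrows leave A except possibly from the top element α, and no arrows enter A from outside. Suppose α = ℵ(G∖A) is the Hartogs number of the complement, i.e., there is no injection of α into G∖A, and (G,E) is loop-free. Then every endomorphism h of (G,E) satisfies h(α) = α. -/

import Mathlib

/-- If the copy `A` of `α + 1` sits inside a loop-free graph `(G,E)` with arrows within `A`
exactly the order, no arrows leaving `A` except possibly from the top element, no arrows
entering `A` from outside, and `α` is the Hartogs number of `G ∖ A` (no injection of `α`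
into `G ∖ A`), then every endomorphism fixes the top vertex. -/
theorem stmt16 (G : Type*) (E : G → G → Prop) (hirr : ∀ x, ¬E x x)
    (α : Ordinal) (ι : {β : Ordinal // β ≤ α} → G) (hι : Function.Injective ι)
    (A : Set G) (hA : A = Set.range ι)
    (hwithin : ∀ b₁ b₂ : {β : Ordinal // β ≤ α}, E (ι b₁) (ι b₂) ↔ b₁.1 < b₂.1)
    (hleave : ∀ b : {β : Ordinal // β ≤ α}, b.1 ≠ α → ∀ g : G, E (ι b) g → g ∈ A)
    (henter : ∀ g : G, g ∉ A → ∀ b : {β : Ordinal // β ≤ α}, ¬E g (ι b))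
    (hHartogs : ¬∃ f : {β : Ordinal // β < α} → {g : G // g ∉ A}, Function.Injective f)
    (h : G → G) (hh : ∀ x y, E x y → E (h x) (h y)) :
    h (ι ⟨α, le_refl α⟩) = ι ⟨α, le_refl α⟩ := by
  classical
  rcases eq_or_ne α 0 with rfl | hα0
  · exact absurd ⟨fun x => absurd x.2 (fun hx => not_lt_zero hx),
      fun x => absurd x.2 (fun hx => not_lt_zero hx)⟩ hHartogs
  by_contra hne
  set T : G := ι ⟨α, le_refl α⟩ with hTdef
  by_cases hTA : h T ∈ A
  · -- Step 2: h T = ι b with b < α leads to contradiction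
    obtain ⟨b, hb⟩ : ∃ b, h T = ι b := by
      rw [hA] at hTA; obtain ⟨b, hb⟩ := hTA; exact ⟨b, hb.symm⟩
    have hbα : b.1 < α := lt_of_le_of_ne b.2 fun hba => hne (by
      rw [hb]; exact congrArg ι (Subtype.ext hba))
    have hmap : ∀ c : {β : Ordinal // β ≤ α}, ∃ d, h (ι c) = ι d := by
      intro c
      rcases lt_or_eq_of_le c.2 with hc | hc
      · have hE : E (ι c) (ι ⟨α, le_refl α⟩) := (hwithin c ⟨α, le_refl α⟩).mpr hc
        have hE2 := hh _ _ hE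
        rw [← hTdef, hb] at hE2
        by_contra hno
        have hout : h (ι c) ∉ A := by
          rw [hA]; rintro ⟨d, hd⟩; exact hno ⟨d, hd.symm⟩
        exact henter _ hout b hE2
      · refine ⟨b, ?_⟩
        have hc' : c = ⟨α, le_refl α⟩ := Subtype.ext hc
        rw [hc', ← hTdef, hb]
    choose g hg using hmap
    have gmono : ∀ c₁ c₂ : {β : Ordinal // β ≤ α}, c₁.1 < c₂.1 → (g c₁).1 < (g c₂).1 := by
      intro c₁ c₂ hlt
      have hE := hh _ _ ((hwithin c₁ c₂).mpr hlt)
      rw [hg c₁, hg c₂] at hE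
      exact (hwithin _ _).mp hE
    have hle : ∀ γ : Ordinal, ∀ hγ : γ ≤ α, γ ≤ (g ⟨γ, hγ⟩).1 := by
      intro γ
      induction γ using Ordinal.induction with
      | h γ IH =>
        intro hγ
        by_contra hlt
        push_neg at hlt
        have h1 := IH (g ⟨γ, hγ⟩).1 hlt (g ⟨γ, hγ⟩).2
        have h2 := gmono ⟨(g ⟨γ, hγ⟩).1, (g ⟨γ, hγ⟩).2⟩ ⟨γ, hγ⟩ hlt
        exact absurd (h1.trans_lt h2) (lt_irrefl _)
    have htop : g ⟨α, le_refl α⟩ = b := hι (by rw [← hg, ← hTdef, hb])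
    have hfin := hle α (le_refl α)
    rw [htop] at hfin
    exact absurd (hfin.trans_lt hbα) (lt_irrefl _)
  · -- Step 1: h T ∉ A leads to an injection of α into G ∖ A
    have claimA : ∀ β (hβ : β < α), h (ι ⟨β, hβ.le⟩) ∈ A → h (ι ⟨β, hβ.le⟩) = T := by
      intro β hβ hmem
      rw [hA] at hmem
      obtain ⟨c, hc⟩ := hmem
      have hE := hh _ _ ((hwithin ⟨β, hβ.le⟩ ⟨α, le_refl α⟩).mpr hβ)
      rw [← hc] at hE
      have hcα : c.1 = α := by
        by_contra hne'
        exact hTA (hleave c hne' _ hE)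
      rw [← hc]
      exact congrArg ι (Subtype.ext hcα)
    have claimB : ∀ β (hβ : β < α), h (ι ⟨β, hβ.le⟩) ∈ A → β = 0 := by
      intro β hβ hmem
      by_contra hβ0
      have h0β : (0 : Ordinal) < β := pos_iff_ne_zero.mpr hβ0
      have h0α : (0 : Ordinal) < α := h0β.trans hβ
      have hE := hh _ _ ((hwithin ⟨0, h0α.le⟩ ⟨β, hβ.le⟩).mpr h0β)
      rw [claimA β hβ hmem] at hE
      have h0A : h (ι ⟨0, h0α.le⟩) ∈ A := by
        by_contra h0A
        exact henter _ h0A ⟨α, le_refl α⟩ hE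
      rw [claimA 0 h0α h0A] at hE
      exact hirr _ hE
    set f : {β : Ordinal // β < α} → {g : G // g ∉ A} := fun x =>
      if hc : h (ι ⟨x.1, x.2.le⟩) ∈ A then ⟨h T, hTA⟩
      else ⟨h (ι ⟨x.1, x.2.le⟩), hc⟩ with hfdef
    have key : ∀ x y : {β : Ordinal // β < α}, x.1 < y.1 → f x ≠ f y := by
      intro x y hlt hfeq
      by_cases hx : h (ι ⟨x.1, x.2.le⟩) ∈ A
      · by_cases hy : h (ι ⟨y.1, y.2.le⟩) ∈ A
        · have hx0 := claimB x.1 x.2 hx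
          have hy0 := claimB y.1 y.2 hy
          rw [hx0, hy0] at hlt
          exact lt_irrefl _ hlt
        · simp only [hfdef, dif_pos hx, dif_neg hy] at hfeq
          have hv : h T = h (ι ⟨y.1, y.2.le⟩) := congrArg Subtype.val hfeq
          have hE := hh _ _ ((hwithin ⟨y.1, y.2.le⟩ ⟨α, le_refl α⟩).mpr y.2)
          rw [← hTdef, ← hv] at hE
          exact hirr _ hE
      · by_cases hy : h (ι ⟨y.1, y.2.le⟩) ∈ A
        · have hy0 := claimB y.1 y.2 hy
          rw [hy0] at hlt
          exact not_lt_zero hlt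
        · simp only [hfdef, dif_neg hx, dif_neg hy] at hfeq
          have heq : h (ι ⟨x.1, x.2.le⟩) = h (ι ⟨y.1, y.2.le⟩) := congrArg Subtype.val hfeq
          have hE := hh _ _ ((hwithin ⟨x.1, x.2.le⟩ ⟨y.1, y.2.le⟩).mpr hlt)
          rw [heq] at hE
          exact hirr _ hE
    refine hHartogs ⟨f, ?_⟩
    intro x y hxy
    rcases lt_trichotomy x.1 y.1 with hlt | heq | hgt
    · exact absurd hxy (key x y hlt)
    · exact Subtype.ext heq
    · exact absurd hxy.symm (key y x hgt)
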